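/- arXiv:2205.02329 — 3 statements merged into one kernel-verified Lean document; each statement's English description precedes it below -/
import Mathlib

section
/- Let k : ℝ^m × ℝ^n → ℝ^m be twice continuously differentiable and let z : ℝ^n → ℝ^m be twice differentiable at a point p₀ such that k(z(p), p) = 0 for all p ∈ ℝ^n. Suppose the partial Fréchet derivative A := D_z k(z(p₀), p₀) is invertible. Then for all directions u, v ∈ ℝ^n, the second derivative of z at p₀ satisfies D²z(p₀)[u, v] = −A⁻¹ ( D²k(z(p₀), p₀)[ (Dz(p₀)u, u), (Dz(p₀)v, v) ] ), where D²k(z(p₀), p₀) is the second Fréchet derivative of k regarded as a bilinear map on ℝ^m × ℝ^n. -/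
open scoped Topology

set_option maxHeartbeats 1000000 in
/-- **Second-Order Implicit Function Theorem (Theorem 2 of the paper).**
If `k : ℝ^m × ℝ^n → ℝ^m` is twice continuously differentiable, `z : ℝ^n → ℝ^m` is
twice differentiable at `p₀` (differentiable near `p₀` and with `fderiv ℝ z`
differentiable at `p₀`), `k (z p, p) = 0` for all `p`, and the partial derivative
`A = D_z k (z p₀, p₀)` is invertible, then for all directions `u v : ℝ^n`,
`D²z(p₀)[u, v] = -A⁻¹ (D²k(z p₀, p₀)[(Dz(p₀)u, u), (Dz(p₀)v, v)])`. -/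
theorem second_order_IFT {m n : ℕ}
    (k : EuclideanSpace ℝ (Fin m) × EuclideanSpace ℝ (Fin n) → EuclideanSpace ℝ (Fin m))
    (z : EuclideanSpace ℝ (Fin n) → EuclideanSpace ℝ (Fin m))
    (p₀ : EuclideanSpace ℝ (Fin n))
    (hk : ContDiff ℝ 2 k)
    (hz : ∀ᶠ p in 𝓝 p₀, DifferentiableAt ℝ z p)
    (hz2 : DifferentiableAt ℝ (fderiv ℝ z) p₀)
    (hfix : ∀ p, k (z p, p) = 0)
    (A : EuclideanSpace ℝ (Fin m) ≃L[ℝ] EuclideanSpace ℝ (Fin m))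
    (hA : (A : EuclideanSpace ℝ (Fin m) →L[ℝ] EuclideanSpace ℝ (Fin m))
        = fderiv ℝ (fun y => k (y, p₀)) (z p₀)) :
    ∀ u v : EuclideanSpace ℝ (Fin n),
      fderiv ℝ (fderiv ℝ z) p₀ u v
        = -(A.symm
            (fderiv ℝ (fderiv ℝ k) (z p₀, p₀)
              (fderiv ℝ z p₀ u, u) (fderiv ℝ z p₀ v, v))) := by
  intro u v
  have hkd : Differentiable ℝ k := hk.differentiable (by norm_num)
  have hk1 : ContDiff ℝ 1 (fderiv ℝ k) := hk.fderiv_right (by norm_num)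
  have hzp : DifferentiableAt ℝ z p₀ := hz.self_of_nhds
  set B : EuclideanSpace ℝ (Fin n) →
      (EuclideanSpace ℝ (Fin m) × EuclideanSpace ℝ (Fin n) →L[ℝ] EuclideanSpace ℝ (Fin m)) :=
    fun p => fderiv ℝ k (z p, p) with hBdef
  set C : EuclideanSpace ℝ (Fin n) →
      (EuclideanSpace ℝ (Fin n) →L[ℝ]
        EuclideanSpace ℝ (Fin m) × EuclideanSpace ℝ (Fin n)) :=
    fun p => (fderiv ℝ z p).prod (ContinuousLinearMap.id ℝ (EuclideanSpace ℝ (Fin n)))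
    with hCdef
  -- the composed function is eventually zero
  have hzero : (fun p => (B p).comp (C p)) =ᶠ[𝓝 p₀]
      fun _ => (0 : EuclideanSpace ℝ (Fin n) →L[ℝ] EuclideanSpace ℝ (Fin m)) := by
    filter_upwards [hz] with p hp
    have hφ : DifferentiableAt ℝ (fun q => (z q, q)) p := hp.prodMk differentiableAt_id
    have h1 : fderiv ℝ (k ∘ fun q => (z q, q)) p = (B p).comp (C p) :=
      (HasFDerivAt.comp (f := fun q => (z q, q)) p (hkd (z p, p)).hasFDerivAt
        ((hp.hasFDerivAt).prodMk (hasFDerivAt_id p))).fderiv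
    have h2 : (k ∘ fun q => (z q, q)) = fun _ => (0 : EuclideanSpace ℝ (Fin m)) :=
      funext hfix
    rw [← h1, h2, fderiv_fun_const]
    rfl
  -- differentiability of B and C at p₀
  have hBd : DifferentiableAt ℝ B p₀ :=
    DifferentiableAt.comp p₀ (hk1.differentiable one_ne_zero (z p₀, p₀))
      (hzp.prodMk differentiableAt_id)
  have hCeq : C = fun p =>
      (ContinuousLinearMap.compL ℝ (EuclideanSpace ℝ (Fin n)) (EuclideanSpace ℝ (Fin m))
          (EuclideanSpace ℝ (Fin m) × EuclideanSpace ℝ (Fin n))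
          (ContinuousLinearMap.inl ℝ (EuclideanSpace ℝ (Fin m)) (EuclideanSpace ℝ (Fin n))))
          (fderiv ℝ z p)
        + ContinuousLinearMap.inr ℝ (EuclideanSpace ℝ (Fin m)) (EuclideanSpace ℝ (Fin n)) := by
    funext p
    ext w <;> simp [hCdef]
  have hCd : DifferentiableAt ℝ C p₀ := by
    rw [hCeq]
    exact (((ContinuousLinearMap.compL ℝ (EuclideanSpace ℝ (Fin n)) (EuclideanSpace ℝ (Fin m))
        (EuclideanSpace ℝ (Fin m) × EuclideanSpace ℝ (Fin n))
        (ContinuousLinearMap.inl ℝ (EuclideanSpace ℝ (Fin m))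
          (EuclideanSpace ℝ (Fin n)))).differentiableAt).comp p₀ hz2).add_const _
  -- derivative of C at p₀
  have hCderiv : fderiv ℝ C p₀ =
      (ContinuousLinearMap.compL ℝ (EuclideanSpace ℝ (Fin n)) (EuclideanSpace ℝ (Fin m))
          (EuclideanSpace ℝ (Fin m) × EuclideanSpace ℝ (Fin n))
          (ContinuousLinearMap.inl ℝ (EuclideanSpace ℝ (Fin m))
            (EuclideanSpace ℝ (Fin n)))).comp (fderiv ℝ (fderiv ℝ z) p₀) := by
    rw [hCeq]
    exact (((ContinuousLinearMap.compL ℝ (EuclideanSpace ℝ (Fin n)) (EuclideanSpace ℝ (Fin m))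
        (EuclideanSpace ℝ (Fin m) × EuclideanSpace ℝ (Fin n))
        (ContinuousLinearMap.inl ℝ (EuclideanSpace ℝ (Fin m))
          (EuclideanSpace ℝ (Fin n)))).hasFDerivAt.comp p₀
        hz2.hasFDerivAt).add_const _).fderiv
  -- derivative of B at p₀
  have hBderiv : fderiv ℝ B p₀ =
      (fderiv ℝ (fderiv ℝ k) (z p₀, p₀)).comp
        ((fderiv ℝ z p₀).prod (ContinuousLinearMap.id ℝ (EuclideanSpace ℝ (Fin n)))) := by
    have hφ : DifferentiableAt ℝ (fun q => (z q, q)) p₀ := hzp.prodMk differentiableAt_id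
    exact (HasFDerivAt.comp (f := fun q => (z q, q)) p₀
      (hk1.differentiable one_ne_zero (z p₀, p₀)).hasFDerivAt
      ((hzp.hasFDerivAt).prodMk (hasFDerivAt_id p₀))).fderiv
  -- the derivative of the composed function is zero
  have hmain : fderiv ℝ (fun p => (B p).comp (C p)) p₀ = 0 := by
    rw [hzero.fderiv_eq, fderiv_fun_const]
    rfl
  rw [fderiv_clm_comp hBd hCd] at hmain
  have hmainuv := congrFun (congrArg DFunLike.coe (congrFun (congrArg DFunLike.coe hmain) u)) v
  simp only [ContinuousLinearMap.add_apply, ContinuousLinearMap.coe_comp', Function.comp_apply,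
    ContinuousLinearMap.compL_apply, ContinuousLinearMap.flip_apply,
    ContinuousLinearMap.zero_apply] at hmainuv
  rw [hCderiv, hBderiv] at hmainuv
  simp only [ContinuousLinearMap.coe_comp', Function.comp_apply,
    ContinuousLinearMap.compL_apply, ContinuousLinearMap.prod_apply,
    ContinuousLinearMap.coe_id', id_eq, ContinuousLinearMap.inl_apply] at hmainuv
  -- identify A with the partial derivative
  have hpart : ∀ w : EuclideanSpace ℝ (Fin m), B p₀ (w, 0) = A w := by
    intro w
    have h : fderiv ℝ (fun y => k (y, p₀)) (z p₀)
        = (fderiv ℝ k (z p₀, p₀)).comp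
          (ContinuousLinearMap.inl ℝ (EuclideanSpace ℝ (Fin m)) (EuclideanSpace ℝ (Fin n))) :=
      ((hkd (z p₀, p₀)).hasFDerivAt.comp (z p₀) (hasFDerivAt_prodMk_left (z p₀) p₀)).fderiv
    have h2 := congrFun (congrArg DFunLike.coe (hA.trans h)) w
    simpa only [hBdef, ContinuousLinearMap.coe_comp', Function.comp_apply,
      ContinuousLinearMap.inl_apply, ContinuousLinearEquiv.coe_coe] using h2.symm
  -- conclude
  have hmainuv' : A (fderiv ℝ (fderiv ℝ z) p₀ u v)
      + fderiv ℝ (fderiv ℝ k) (z p₀, p₀) (fderiv ℝ z p₀ u, u) (fderiv ℝ z p₀ v, v) = 0 := by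
    rw [← hpart]
    convert hmainuv using 3
    rfl
  have hfin := eq_neg_of_add_eq_zero_left hmainuv'
  calc fderiv ℝ (fderiv ℝ z) p₀ u v
      = A.symm (A (fderiv ℝ (fderiv ℝ z) p₀ u v)) := (A.symm_apply_apply _).symm
    _ = _ := by rw [hfin, map_neg]
end

section
/- Let k : ℝ^m × ℝ^n → ℝ^m be twice continuously differentiable, let f : ℝ^m × ℝ^n → ℝ be twice differentiable, and let z : ℝ^n → ℝ^m be twice differentiable at p₀ with k(z(p), p) = 0 for all p ∈ ℝ^n. Suppose A := D_z k(z(p₀), p₀) is invertible, and set J := −A⁻¹ ∘ D_p k(z(p₀), p₀). Then the composite g(p) = f(z(p), p) satisfies, for all u, v ∈ ℝ^n: D²g(p₀)[u, v] = D²f(z(p₀), p₀)[ (Ju, u), (Jv, v) ] − D_z f(z(p₀), p₀)( A⁻¹ D²k(z(p₀), p₀)[ (Ju, u), (Jv, v) ] ). -/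
open scoped Topology

open ContinuousLinearMap in
lemma second_fderiv_comp_pair {E F G : Type*}
    [NormedAddCommGroup E] [NormedSpace ℝ E]
    [NormedAddCommGroup F] [NormedSpace ℝ F]
    [NormedAddCommGroup G] [NormedSpace ℝ G]
    (φ : F × E → G) (z : E → F) (p₀ : E)
    (hφ : Differentiable ℝ φ) (hφ2 : Differentiable ℝ (fderiv ℝ φ))
    (hz : ∀ᶠ p in 𝓝 p₀, DifferentiableAt ℝ z p)
    (hz2 : DifferentiableAt ℝ (fderiv ℝ z) p₀) (u v : E) :
    fderiv ℝ (fderiv ℝ (fun p => φ (z p, p))) p₀ u v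
      = fderiv ℝ (fderiv ℝ φ) (z p₀, p₀) (fderiv ℝ z p₀ u, u) (fderiv ℝ z p₀ v, v)
        + fderiv ℝ φ (z p₀, p₀) (fderiv ℝ (fderiv ℝ z) p₀ u v, 0) := by
  have hz0 : DifferentiableAt ℝ z p₀ := hz.self_of_nhds
  set T : (E →L[ℝ] F) →L[ℝ] (E →L[ℝ] F × E) := compL ℝ E F (F × E) (inl ℝ F E) with hT
  set H : E → (E →L[ℝ] F × E) := fun p => (fderiv ℝ z p).prod (ContinuousLinearMap.id ℝ E)
    with hHdef
  set c : E → (F × E →L[ℝ] G) := fun p => fderiv ℝ φ (z p, p) with hcdef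
  have hHeq : H = fun p => T (fderiv ℝ z p) + inr ℝ F E := by
    funext p; ext x <;> simp [hHdef, hT]
  have hHder : HasFDerivAt H (T.comp (fderiv ℝ (fderiv ℝ z) p₀)) p₀ := by
    rw [hHeq]
    exact (T.hasFDerivAt.comp p₀ hz2.hasFDerivAt).add_const _
  have hpair : ∀ p, DifferentiableAt ℝ z p → HasFDerivAt (fun x => (z x, x))
      ((fderiv ℝ z p).prod (ContinuousLinearMap.id ℝ E)) p := fun p hp =>
    hp.hasFDerivAt.prodMk (hasFDerivAt_id p)
  have hcder : HasFDerivAt c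
      ((fderiv ℝ (fderiv ℝ φ) (z p₀, p₀)).comp
        ((fderiv ℝ z p₀).prod (ContinuousLinearMap.id ℝ E))) p₀ := by
    have := HasFDerivAt.comp (f := fun x => (z x, x)) p₀ (hφ2 (z p₀, p₀)).hasFDerivAt (hpair p₀ hz0)
    exact this
  have key : fderiv ℝ (fun p => φ (z p, p)) =ᶠ[𝓝 p₀] fun p => (c p).comp (H p) := by
    filter_upwards [hz] with p hp
    have := HasFDerivAt.comp (f := fun x => (z x, x)) p (hφ (z p, p)).hasFDerivAt (hpair p hp)
    exact this.fderiv
  have h2 : fderiv ℝ (fderiv ℝ (fun p => φ (z p, p))) p₀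
      = fderiv ℝ (fun p => (c p).comp (H p)) p₀ := key.fderiv_eq
  rw [h2, fderiv_clm_comp hcder.differentiableAt hHder.differentiableAt,
    hHder.fderiv, hcder.fderiv]
  simp [hHdef, hcdef, hT, ContinuousLinearMap.comp_apply]
  exact add_comm _ _

/-- **Total Hessian of the upper objective (Equation (4) + Theorem 2 of the paper).**
With `k (z p, p) = 0` defining `z`, `A = D_z k (z p₀, p₀)` invertible and
`J = -A⁻¹ ∘ D_p k (z p₀, p₀)`, the composite `g p = f (z p, p)` satisfies
`D²g(p₀)[u, v] = D²f(z p₀, p₀)[(Ju, u), (Jv, v)]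
  - D_z f(z p₀, p₀)(A⁻¹ D²k(z p₀, p₀)[(Ju, u), (Jv, v)])`. -/
theorem total_hessian_upper_objective {m n : ℕ}
    (k : EuclideanSpace ℝ (Fin m) × EuclideanSpace ℝ (Fin n) → EuclideanSpace ℝ (Fin m))
    (f : EuclideanSpace ℝ (Fin m) × EuclideanSpace ℝ (Fin n) → ℝ)
    (z : EuclideanSpace ℝ (Fin n) → EuclideanSpace ℝ (Fin m))
    (p₀ : EuclideanSpace ℝ (Fin n))
    (hk : ContDiff ℝ 2 k)
    (hf : Differentiable ℝ f)
    (hf2 : Differentiable ℝ (fderiv ℝ f))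
    (hz : ∀ᶠ p in 𝓝 p₀, DifferentiableAt ℝ z p)
    (hz2 : DifferentiableAt ℝ (fderiv ℝ z) p₀)
    (hfix : ∀ p, k (z p, p) = 0)
    (A : EuclideanSpace ℝ (Fin m) ≃L[ℝ] EuclideanSpace ℝ (Fin m))
    (hA : (A : EuclideanSpace ℝ (Fin m) →L[ℝ] EuclideanSpace ℝ (Fin m))
        = fderiv ℝ (fun y => k (y, p₀)) (z p₀))
    (J : EuclideanSpace ℝ (Fin n) →L[ℝ] EuclideanSpace ℝ (Fin m))
    (hJ : J = -((A.symm : EuclideanSpace ℝ (Fin m) →L[ℝ] EuclideanSpace ℝ (Fin m)).comp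
          (fderiv ℝ (fun q => k (z p₀, q)) p₀)))
    (g : EuclideanSpace ℝ (Fin n) → ℝ)
    (hg : g = fun p => f (z p, p)) :
    ∀ u v : EuclideanSpace ℝ (Fin n),
      fderiv ℝ (fderiv ℝ g) p₀ u v
        = fderiv ℝ (fderiv ℝ f) (z p₀, p₀) (J u, u) (J v, v)
          - fderiv ℝ (fun y => f (y, p₀)) (z p₀)
              (A.symm (fderiv ℝ (fderiv ℝ k) (z p₀, p₀) (J u, u) (J v, v))) := by
  intro u v
  subst hg
  have hz0 : DifferentiableAt ℝ z p₀ := hz.self_of_nhds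
  have hk1 : Differentiable ℝ k := hk.differentiable two_ne_zero
  have hk2 : Differentiable ℝ (fderiv ℝ k) :=
    (hk.fderiv_right (m := 1) le_rfl).differentiable one_ne_zero
  set Dk := fderiv ℝ k (z p₀, p₀) with hDk
  -- partial derivatives of k
  have hleft : fderiv ℝ (fun y => k (y, p₀)) (z p₀)
      = Dk.comp (ContinuousLinearMap.inl ℝ _ _) := by
    have := HasFDerivAt.comp (f := fun y => (y, p₀)) (z p₀)
      (hk1 (z p₀, p₀)).hasFDerivAt (hasFDerivAt_prodMk_left (z p₀) p₀)
    exact this.fderiv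
  have hright : fderiv ℝ (fun q => k (z p₀, q)) p₀
      = Dk.comp (ContinuousLinearMap.inr ℝ _ _) := by
    have := HasFDerivAt.comp (f := fun q => (z p₀, q)) p₀
      (hk1 (z p₀, p₀)).hasFDerivAt (hasFDerivAt_prodMk_right (z p₀) p₀)
    exact this.fderiv
  have hAx : ∀ x, A x = Dk (x, 0) := by
    intro x
    have := congrArg (fun (T : EuclideanSpace ℝ (Fin m) →L[ℝ] EuclideanSpace ℝ (Fin m)) => T x)
      (hA.trans hleft)
    simpa using this
  have hsplit : ∀ (x : EuclideanSpace ℝ (Fin m)) (q : EuclideanSpace ℝ (Fin n)),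
      Dk (x, q) = Dk (x, 0) + Dk (0, q) := by
    intro x q
    rw [← map_add]
    norm_num
  -- the composite k (z p, p) is constantly 0
  have hconst : (fun p => k (z p, p)) = fun _ => (0 : EuclideanSpace ℝ (Fin m)) :=
    funext hfix
  have hfd1 : fderiv ℝ (fun p => k (z p, p))
      = fun _ => (0 : EuclideanSpace ℝ (Fin n) →L[ℝ] EuclideanSpace ℝ (Fin m)) := by
    rw [hconst]; funext p; exact fderiv_const_apply 0
  -- first order: fderiv z p₀ = J
  have hchain : fderiv ℝ (fun p => k (z p, p)) p₀
      = Dk.comp ((fderiv ℝ z p₀).prod (ContinuousLinearMap.id ℝ _)) := by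
    have hpair : HasFDerivAt (fun x => (z x, x))
        ((fderiv ℝ z p₀).prod (ContinuousLinearMap.id ℝ _)) p₀ :=
      hz0.hasFDerivAt.prodMk (hasFDerivAt_id p₀)
    have := HasFDerivAt.comp (f := fun x => (z x, x)) p₀ (hk1 (z p₀, p₀)).hasFDerivAt hpair
    exact this.fderiv
  have hfirst : ∀ w, Dk (fderiv ℝ z p₀ w, w) = 0 := by
    intro w
    have h0 : fderiv ℝ (fun p => k (z p, p)) p₀ = 0 := by rw [hfd1]
    have := congrArg (fun (T : EuclideanSpace ℝ (Fin n) →L[ℝ] EuclideanSpace ℝ (Fin m)) => T w)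
      (hchain.symm.trans h0)
    simpa using this
  have hzJ : fderiv ℝ z p₀ = J := by
    refine ContinuousLinearMap.ext fun w => ?_
    have h1 := hfirst w
    rw [hsplit, ← hAx] at h1
    have h2 : A (fderiv ℝ z p₀ w) = -(Dk (0, w)) := eq_neg_of_add_eq_zero_left h1
    have h3 : fderiv ℝ z p₀ w = A.symm (-(Dk (0, w))) := by
      rw [← h2, ContinuousLinearEquiv.symm_apply_apply]
    rw [h3, hJ]
    simp [hright]
  -- second order identity for k
  have hk2nd := second_fderiv_comp_pair k z p₀ hk1 hk2 hz hz2 u v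
  have hzero2 : fderiv ℝ (fderiv ℝ (fun p => k (z p, p))) p₀ u v = 0 := by
    rw [hfd1]
    simp [fderiv_const_apply]
  rw [hzero2, hzJ] at hk2nd
  have hD2z : fderiv ℝ (fderiv ℝ z) p₀ u v
      = -(A.symm (fderiv ℝ (fderiv ℝ k) (z p₀, p₀) (J u, u) (J v, v))) := by
    have h4 : A (fderiv ℝ (fderiv ℝ z) p₀ u v)
        = -(fderiv ℝ (fderiv ℝ k) (z p₀, p₀) (J u, u) (J v, v)) := by
      rw [hAx]
      exact eq_neg_of_add_eq_zero_right hk2nd.symm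
    have h5 := congrArg A.symm h4
    simpa using h5
  -- second order identity for f
  have hf2nd := second_fderiv_comp_pair f z p₀ hf hf2 hz hz2 u v
  rw [hzJ, hD2z] at hf2nd
  have hfleft : fderiv ℝ (fun y => f (y, p₀)) (z p₀)
      = (fderiv ℝ f (z p₀, p₀)).comp (ContinuousLinearMap.inl ℝ _ _) := by
    have := HasFDerivAt.comp (f := fun y => (y, p₀)) (z p₀)
      (hf (z p₀, p₀)).hasFDerivAt (hasFDerivAt_prodMk_left (z p₀) p₀)
    exact this.fderiv
  rw [hf2nd, hfleft]
  have : ((-(A.symm (fderiv ℝ (fderiv ℝ k) (z p₀, p₀) (J u, u) (J v, v))),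
      (0 : EuclideanSpace ℝ (Fin n))) : EuclideanSpace ℝ (Fin m) × EuclideanSpace ℝ (Fin n))
      = -((A.symm (fderiv ℝ (fderiv ℝ k) (z p₀, p₀) (J u, u) (J v, v))), 0) := by
    simp [Prod.neg_mk]
  rw [this, map_neg]
  simp [sub_eq_add_neg]
end

section
/- Let A, Ã be m×m real matrices and B, B̃ be m×n real matrices, and let δ, γ, β, R, α₁, α₂ be nonnegative reals with α₁ > 0 and α₂ > 0. Assume ‖Ã − A‖_op ≤ γδ, ‖B̃ − B‖_F ≤ βδ, ‖B‖_F ≤ R, ‖Ãv‖ ≥ α₁‖v‖ for all v ∈ ℝ^m, and ‖Av‖ ≥ α₂‖v‖ for all v ∈ ℝ^m. Then Ã and A are invertible and ‖Ã⁻¹B̃ − A⁻¹B‖_F ≤ (β/α₁)δ + (γR/(α₁α₂))δ. -/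
/-- Euclidean (ℓ²) norm of a vector. -/
noncomputable def euclNorm {ι : Type*} [Fintype ι] (v : ι → ℝ) : ℝ :=
  Real.sqrt (∑ i, v i ^ 2)

/-- Frobenius norm of a real matrix. -/
noncomputable def frobNorm {ι κ : Type*} [Fintype ι] [Fintype κ] (M : Matrix ι κ ℝ) : ℝ :=
  Real.sqrt (∑ i, ∑ j, M i j ^ 2)

/-- ℓ²→ℓ² operator norm of a real matrix. -/
noncomputable def l2OpNorm {ι κ : Type*} [Fintype ι] [Fintype κ] [DecidableEq κ]
    (M : Matrix ι κ ℝ) : ℝ :=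
  ‖(Matrix.toEuclideanLin M).toContinuousLinearMap‖

lemma euclNorm_eq_norm {ι : Type*} [Fintype ι] (v : ι → ℝ) :
    euclNorm v = ‖(WithLp.equiv 2 (ι → ℝ)).symm v‖ := by
  rw [EuclideanSpace.norm_eq, euclNorm]
  congr 1
  refine Finset.sum_congr rfl fun i _ => ?_
  rw [WithLp.equiv_symm_apply, WithLp.ofLp_toLp, Real.norm_eq_abs, sq_abs]

lemma euclNorm_nonneg {ι : Type*} [Fintype ι] (v : ι → ℝ) : 0 ≤ euclNorm v :=
  Real.sqrt_nonneg _

lemma euclNorm_eq_zero {ι : Type*} [Fintype ι] {v : ι → ℝ} (h : euclNorm v = 0) : v = 0 := by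
  rw [euclNorm_eq_norm, norm_eq_zero] at h
  have := congrArg (WithLp.equiv 2 (ι → ℝ)) h
  simpa using this

lemma euclNorm_zero {ι : Type*} [Fintype ι] : euclNorm (0 : ι → ℝ) = 0 := by
  simp [euclNorm]

lemma euclNorm_mulVec_le {ι κ : Type*} [Fintype ι] [Fintype κ] [DecidableEq κ]
    (M : Matrix ι κ ℝ) (v : κ → ℝ) :
    euclNorm (M.mulVec v) ≤ l2OpNorm M * euclNorm v := by
  rw [euclNorm_eq_norm, euclNorm_eq_norm]
  have := (Matrix.toEuclideanLin M).toContinuousLinearMap.le_opNorm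
    ((WithLp.equiv 2 (κ → ℝ)).symm v)
  simpa [l2OpNorm, WithLp.equiv_symm_apply, Matrix.toEuclideanLin_apply_piLp_toLp] using this

lemma l2OpNorm_nonneg {ι κ : Type*} [Fintype ι] [Fintype κ] [DecidableEq κ]
    (M : Matrix ι κ ℝ) : 0 ≤ l2OpNorm M := norm_nonneg _

lemma l2OpNorm_neg {ι κ : Type*} [Fintype ι] [Fintype κ] [DecidableEq κ]
    (M : Matrix ι κ ℝ) : l2OpNorm (-M) = l2OpNorm M := by
  unfold l2OpNorm
  rw [map_neg]
  have : (LinearMap.toContinuousLinearMap (-(Matrix.toEuclideanLin M)))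
      = -(LinearMap.toContinuousLinearMap (Matrix.toEuclideanLin M)) := by
    ext x; rfl
  rw [this, norm_neg]

lemma frobNorm_eq_sqrt_cols {ι κ : Type*} [Fintype ι] [Fintype κ] (M : Matrix ι κ ℝ) :
    frobNorm M = Real.sqrt (∑ j, euclNorm (fun i => M i j) ^ 2) := by
  rw [frobNorm, Finset.sum_comm]
  congr 1
  refine Finset.sum_congr rfl fun j _ => ?_
  rw [euclNorm, Real.sq_sqrt (by positivity)]

lemma frobNorm_nonneg {ι κ : Type*} [Fintype ι] [Fintype κ] (M : Matrix ι κ ℝ) :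
    0 ≤ frobNorm M := Real.sqrt_nonneg _

lemma frobNorm_mul_le_of_colbound {ι κ μ : Type*} [Fintype ι] [Fintype κ] [Fintype μ]
    (N : Matrix ι κ ℝ) (M : Matrix κ μ ℝ) (c : ℝ) (hc : 0 ≤ c)
    (h : ∀ v : κ → ℝ, euclNorm (N.mulVec v) ≤ c * euclNorm v) :
    frobNorm (N * M) ≤ c * frobNorm M := by
  rw [frobNorm_eq_sqrt_cols, frobNorm_eq_sqrt_cols]
  have key : ∀ j, euclNorm (fun i => (N * M) i j) ^ 2 ≤ c ^ 2 * euclNorm (fun i => M i j) ^ 2 := by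
    intro j
    have hcol : (fun i => (N * M) i j) = N.mulVec (fun i => M i j) := by
      funext i; simp [Matrix.mul_apply, Matrix.mulVec, dotProduct]
    rw [hcol, ← mul_pow]
    exact pow_le_pow_left₀ (euclNorm_nonneg _) (h _) 2
  calc Real.sqrt (∑ j, euclNorm (fun i => (N * M) i j) ^ 2)
      ≤ Real.sqrt (∑ j, c ^ 2 * euclNorm (fun i => M i j) ^ 2) := by
        apply Real.sqrt_le_sqrt
        exact Finset.sum_le_sum fun j _ => key j
    _ = c * Real.sqrt (∑ j, euclNorm (fun i => M i j) ^ 2) := by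
        rw [← Finset.mul_sum, Real.sqrt_mul (by positivity), Real.sqrt_sq hc]

section Frob
attribute [local instance] Matrix.frobeniusNormedAddCommGroup

lemma frobNorm_eq_norm' {ι κ : Type*} [Fintype ι] [Fintype κ] (M : Matrix ι κ ℝ) :
    frobNorm M = ‖M‖ := by
  rw [Matrix.frobenius_norm_def, frobNorm, Real.sqrt_eq_rpow]
  congr 1
  refine Finset.sum_congr rfl fun i _ => Finset.sum_congr rfl fun j _ => ?_
  rw [Real.rpow_two, Real.norm_eq_abs, sq_abs]

lemma frobNorm_add_le {ι κ : Type*} [Fintype ι] [Fintype κ] (X Y : Matrix ι κ ℝ) :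
    frobNorm (X + Y) ≤ frobNorm X + frobNorm Y := by
  rw [frobNorm_eq_norm', frobNorm_eq_norm', frobNorm_eq_norm']
  exact norm_add_le X Y

end Frob

/-- Injectivity of `mulVec` from a coercivity lower bound. -/
lemma mulVec_injective_of_lb {m : ℕ} (A : Matrix (Fin m) (Fin m) ℝ) (α : ℝ) (hα : 0 < α)
    (h : ∀ v : Fin m → ℝ, α * euclNorm v ≤ euclNorm (A.mulVec v)) :
    Function.Injective A.mulVec := by
  intro u v huv
  have h0 : A.mulVec (u - v) = 0 := by
    rw [Matrix.mulVec_sub, huv, sub_self]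
  have := h (u - v)
  rw [h0, euclNorm_zero] at this
  have hnn := euclNorm_nonneg (u - v)
  have : euclNorm (u - v) = 0 := le_antisymm (by nlinarith) hnn
  have := euclNorm_eq_zero this
  exact sub_eq_zero.mp this

/-- **First-Order Error Bound (Theorem 3 of the paper).** -/
theorem first_order_error_bound {m n : ℕ}
    (A A' : Matrix (Fin m) (Fin m) ℝ) (B B' : Matrix (Fin m) (Fin n) ℝ)
    (δ γ β R α₁ α₂ : ℝ)
    (hδ : 0 ≤ δ) (hγ : 0 ≤ γ) (hβ : 0 ≤ β) (hR : 0 ≤ R)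
    (hα₁ : 0 < α₁) (hα₂ : 0 < α₂)
    (hAop : l2OpNorm (A' - A) ≤ γ * δ)
    (hBF : frobNorm (B' - B) ≤ β * δ)
    (hB : frobNorm B ≤ R)
    (hA'lb : ∀ v : Fin m → ℝ, α₁ * euclNorm v ≤ euclNorm (A'.mulVec v))
    (hAlb : ∀ v : Fin m → ℝ, α₂ * euclNorm v ≤ euclNorm (A.mulVec v)) :
    IsUnit A' ∧ IsUnit A ∧
      frobNorm (A'⁻¹ * B' - A⁻¹ * B) ≤ (β / α₁) * δ + (γ * R / (α₁ * α₂)) * δ := by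
  have hU' : IsUnit A' :=
    Matrix.mulVec_injective_iff_isUnit.mp (mulVec_injective_of_lb A' α₁ hα₁ hA'lb)
  have hU : IsUnit A :=
    Matrix.mulVec_injective_iff_isUnit.mp (mulVec_injective_of_lb A α₂ hα₂ hAlb)
  have hdet' : IsUnit A'.det := (Matrix.isUnit_iff_isUnit_det A').mp hU'
  have hdet : IsUnit A.det := (Matrix.isUnit_iff_isUnit_det A).mp hU
  refine ⟨hU', hU, ?_⟩
  -- column bounds for the inverses
  have hinv' : ∀ w : Fin m → ℝ, euclNorm (A'⁻¹.mulVec w) ≤ α₁⁻¹ * euclNorm w := by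
    intro w
    have h1 := hA'lb (A'⁻¹.mulVec w)
    rw [Matrix.mulVec_mulVec, Matrix.mul_nonsing_inv _ hdet', Matrix.one_mulVec] at h1
    rw [le_inv_mul_iff₀ hα₁]
    exact h1
  have hinv : ∀ w : Fin m → ℝ, euclNorm (A⁻¹.mulVec w) ≤ α₂⁻¹ * euclNorm w := by
    intro w
    have h1 := hAlb (A⁻¹.mulVec w)
    rw [Matrix.mulVec_mulVec, Matrix.mul_nonsing_inv _ hdet, Matrix.one_mulVec] at h1
    rw [le_inv_mul_iff₀ hα₂]
    exact h1
  -- decomposition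
  have h1 : A'⁻¹ * A' = 1 := Matrix.nonsing_inv_mul _ hdet'
  have h2 : A * A⁻¹ = 1 := Matrix.mul_nonsing_inv _ hdet
  have e1 : A'⁻¹ * (A * (A⁻¹ * B)) = A'⁻¹ * B := by
    rw [← Matrix.mul_assoc A, h2, Matrix.one_mul]
  have e2 : A'⁻¹ * (A' * (A⁻¹ * B)) = A⁻¹ * B := by
    rw [← Matrix.mul_assoc, ← Matrix.mul_assoc, h1, Matrix.one_mul]
  have hdecomp : A'⁻¹ * B' - A⁻¹ * B
      = A'⁻¹ * (B' - B) + A'⁻¹ * ((A - A') * (A⁻¹ * B)) := by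
    simp only [Matrix.sub_mul, Matrix.mul_sub, e1, e2]
    abel
  -- bound first term
  have hX : frobNorm (A'⁻¹ * (B' - B)) ≤ α₁⁻¹ * (β * δ) := by
    refine le_trans (frobNorm_mul_le_of_colbound _ _ α₁⁻¹ (by positivity) hinv') ?_
    exact mul_le_mul_of_nonneg_left hBF (by positivity)
  -- bound middle factor
  have hopAA : l2OpNorm (A - A') ≤ γ * δ := by
    have : A - A' = -(A' - A) := by abel
    rw [this, l2OpNorm_neg]; exact hAop
  have hAinvB : frobNorm (A⁻¹ * B) ≤ α₂⁻¹ * R := by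
    refine le_trans (frobNorm_mul_le_of_colbound _ _ α₂⁻¹ (by positivity) hinv) ?_
    exact mul_le_mul_of_nonneg_left hB (by positivity)
  have hmid : frobNorm ((A - A') * (A⁻¹ * B)) ≤ (γ * δ) * (α₂⁻¹ * R) := by
    refine le_trans (frobNorm_mul_le_of_colbound _ _ (l2OpNorm (A - A'))
      (l2OpNorm_nonneg _) (euclNorm_mulVec_le _)) ?_
    exact mul_le_mul hopAA hAinvB (frobNorm_nonneg _) (by positivity)
  have hY : frobNorm (A'⁻¹ * ((A - A') * (A⁻¹ * B))) ≤ α₁⁻¹ * ((γ * δ) * (α₂⁻¹ * R)) := by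
    refine le_trans (frobNorm_mul_le_of_colbound _ _ α₁⁻¹ (by positivity) hinv') ?_
    exact mul_le_mul_of_nonneg_left hmid (by positivity)
  rw [hdecomp]
  refine le_trans (frobNorm_add_le _ _) (le_trans (add_le_add hX hY) (le_of_eq (by field_simp)))
end
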